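/- Let H be a finite-dimensional complex inner product space, let G be a unit vector in an ancilla space A, let U be a unitary on A ⊗ H satisfying U² = 1, and define R = 2|G⟩⟨G| ⊗ 1 − 1 and W = R U. Suppose the operator M := (⟨G| ⊗ 1) U (|G⟩ ⊗ 1) on H is self-adjoint. Then for all natural numbers n, (⟨G| ⊗ 1) Wⁿ (|G⟩ ⊗ 1) = T_n(M), where T_n is the n-th Chebyshev polynomial of the first kind (applied to the operator M). -/

import Mathlib

open scoped Matrix

/-- The isometric embedding `|ψ⟩ ↦ |G⟩ ⊗ |ψ⟩`, as a matrix. -/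
def qubitizationIota (m n : ℕ) (G : Fin m → ℂ) :
    Matrix (Fin m × Fin n) (Fin n) ℂ :=
  fun p j => G p.1 * (if p.2 = j then 1 else 0)

/-- The reflection `R = 2 |G⟩⟨G| ⊗ 1 − 1`, as a matrix. -/
def qubitizationR (m n : ℕ) (G : Fin m → ℂ) :
    Matrix (Fin m × Fin n) (Fin m × Fin n) ℂ :=
  (2 : ℂ) • (Matrix.kroneckerMap (· * ·)
      (fun a b => G a * star (G b)) (1 : Matrix (Fin n) (Fin n) ℂ)) - 1

/-- Qubitization: if `G` is a unit vector, `U` is unitary with `U² = 1`, and the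
block-encoded operator `M = (⟨G|⊗1) U (|G⟩⊗1)` is Hermitian, then
`(⟨G|⊗1) (RU)ᵏ (|G⟩⊗1) = T_k(M)`, the `k`-th Chebyshev polynomial of `M`. -/
theorem qubitization_chebyshev (m n : ℕ) (G : Fin m → ℂ)
    (hG : ∑ a, ‖G a‖ ^ 2 = 1)
    (U : Matrix (Fin m × Fin n) (Fin m × Fin n) ℂ)
    (hU : U ∈ Matrix.unitaryGroup (Fin m × Fin n) ℂ)
    (hU2 : U * U = 1)
    (M : Matrix (Fin n) (Fin n) ℂ)
    (hM : M = (qubitizationIota m n G)ᴴ * U * qubitizationIota m n G)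
    (hMherm : M.IsHermitian) :
    ∀ k : ℕ,
      (qubitizationIota m n G)ᴴ * (qubitizationR m n G * U) ^ k * qubitizationIota m n G
        = Polynomial.aeval M (Polynomial.Chebyshev.T ℂ (k : ℤ)) := by
  classical
  set ι : Matrix (Fin m × Fin n) (Fin n) ℂ := qubitizationIota m n G with hι
  have key : ∑ a, star (G a) * G a = 1 := by
    have h : ∀ a, star (G a) * G a = ((‖G a‖ ^ 2 : ℝ) : ℂ) := by
      intro a
      rw [mul_comm]
      exact_mod_cast Complex.mul_conj' (G a)
    rw [Finset.sum_congr rfl fun a _ => h a, ← Complex.ofReal_sum, hG, Complex.ofReal_one]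
  have h1 : ιᴴ * ι = 1 := by
    ext i j
    simp only [Matrix.mul_apply, Matrix.conjTranspose_apply, hι, qubitizationIota,
      Matrix.one_apply, Fintype.sum_prod_type, star_mul', mul_ite, ite_mul,
      mul_one, mul_zero, one_mul, zero_mul, star_one, star_zero]
    simp only [Finset.sum_ite_eq', Finset.mem_univ, if_true]
    rcases eq_or_ne i j with rfl | hij
    · simpa using key
    · simp [hij, hij.symm]
  have hR : qubitizationR m n G = (2 : ℂ) • (ι * ιᴴ) - 1 := by
    unfold qubitizationR
    congr 1
    ext p q
    simp only [Matrix.mul_apply, Matrix.conjTranspose_apply, hι, qubitizationIota,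
      Matrix.kroneckerMap_apply, Matrix.one_apply, star_mul', mul_ite, ite_mul,
      mul_one, mul_zero, one_mul, zero_mul, star_one, star_zero, Matrix.smul_apply]
    simp only [Finset.sum_ite_eq, Finset.mem_univ, if_true]
    rcases eq_or_ne p.2 q.2 with h | h
    · simp [h, Matrix.kroneckerMap, Matrix.one_apply]
    · simp [h, Ne.symm h, Matrix.kroneckerMap]
  have hiR : ιᴴ * qubitizationR m n G = ιᴴ := by
    rw [hR, Matrix.mul_sub, Matrix.mul_one, Matrix.mul_smul, ← Matrix.mul_assoc, h1,
      Matrix.one_mul, two_smul, add_sub_cancel_right]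
  set W := qubitizationR m n G * U with hW
  have hiW : ιᴴ * W = ιᴴ * U := by rw [hW, ← Matrix.mul_assoc, hiR]
  have hkey : ιᴴ * (W * W) = (2 : ℂ) • (M * (ιᴴ * U)) - ιᴴ := by
    calc ιᴴ * (W * W) = (ιᴴ * U) * qubitizationR m n G * U := by
          rw [← Matrix.mul_assoc, hiW, hW, ← Matrix.mul_assoc]
      _ = (ιᴴ * U) * ((2 : ℂ) • (ι * ιᴴ) - 1) * U := by rw [hR]
      _ = (2 : ℂ) • (M * (ιᴴ * U)) - ιᴴ := by
          rw [hM]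
          simp only [Matrix.mul_sub, Matrix.sub_mul, Matrix.mul_one, Matrix.mul_smul,
            Matrix.smul_mul, Matrix.mul_assoc]
          rw [hU2, Matrix.mul_one]
  intro k
  induction k using Nat.twoStepInduction with
  | zero => simp [h1, Polynomial.Chebyshev.T_zero]
  | one =>
      rw [pow_one, hiW, ← hM, Nat.cast_one, Polynomial.Chebyshev.T_one,
        Polynomial.aeval_X]
  | more k ih1 ih2 =>
      have hstep : ιᴴ * U * (W ^ k * ι) = ιᴴ * W ^ (k + 1) * ι := by
        rw [pow_succ', ← hiW]
        simp only [Matrix.mul_assoc]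
      have main : ιᴴ * W ^ (k + 2) * ι
          = (2 : ℂ) • (M * (ιᴴ * W ^ (k + 1) * ι)) - ιᴴ * W ^ k * ι := by
        have hp : ιᴴ * W ^ (k + 2) * ι = (ιᴴ * (W * W)) * (W ^ k * ι) := by
          rw [show k + 2 = 2 + k from by omega, pow_add, sq]
          simp only [Matrix.mul_assoc]
        rw [hp, hkey, Matrix.sub_mul, Matrix.smul_mul,
          Matrix.mul_assoc M (ιᴴ * U) (W ^ k * ι), hstep, Matrix.mul_assoc ιᴴ (W ^ k) ι]
      rw [main, ih1, ih2,
        show ((k + 2 : ℕ) : ℤ) = (k : ℤ) + 2 from by push_cast; ring,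
        Polynomial.Chebyshev.T_add_two, map_sub, map_mul, map_mul,
        Polynomial.aeval_X, map_ofNat,
        show ((k + 1 : ℕ) : ℤ) = (k : ℤ) + 1 from by push_cast; ring,
        two_smul, two_mul, Matrix.add_mul]
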